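/- Let x, y be distinct vertices of a k-vertex-connected graph G and Π a set of k openly-disjoint simple paths from x to y. Let S be a candidate with respect to Π, that is, S = N(Q) for some component Q of G \ Π with |S| = k and |S ∩ π| = 1 for every π ∈ Π. If some bridge of Π straddles S, then x and y are connected in G \ S. -/

import Mathlib

open SimpleGraph

variable {V : Type*}

/-- The graph `G` with the vertices of `S` removed (vertices in `S` become isolated). -/
def delAdj (G : SimpleGraph V) (S : Set V) : SimpleGraph V where
  Adj u v := G.Adj u v ∧ u ∉ S ∧ v ∉ S
  symm := ⟨fun u v ⟨h, hu, hv⟩ => ⟨h.symm, hv, hu⟩⟩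
  loopless := ⟨fun v h => G.loopless.irrefl v h.1⟩

/-- The subgraph of `G` induced on the vertex set `A` (other vertices become isolated). -/
def restrict (G : SimpleGraph V) (A : Set V) : SimpleGraph V where
  Adj u v := G.Adj u v ∧ u ∈ A ∧ v ∈ A
  symm := ⟨fun u v ⟨h, hu, hv⟩ => ⟨h.symm, hv, hu⟩⟩
  loopless := ⟨fun v h => G.loopless.irrefl v h.1⟩

/-- `C` is a connected component of `G \ S`. -/
def IsComp (G : SimpleGraph V) (S C : Set V) : Prop :=
  ∃ v, v ∉ S ∧ C = {u | (delAdj G S).Reachable v u}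

/-- The number of connected components of `G \ S`. -/
noncomputable def numComp (G : SimpleGraph V) (S : Set V) : ℕ :=
  {C : Set V | IsComp G S C}.ncard

/-- The volume of a vertex set `Q`: the number of edges with at least one endpoint in `Q`. -/
noncomputable def vol (G : SimpleGraph V) (Q : Set V) : ℕ :=
  {e ∈ G.edgeSet | ∃ v ∈ Q, v ∈ e}.ncard

/-- `S` is a `k`-shredder: it has `k` vertices and `G \ S` has at least three components. -/
def IsShredder (G : SimpleGraph V) (k : ℕ) (S : Set V) : Prop :=
  S.ncard = k ∧ 3 ≤ numComp G S

/-- `G` is `k`-vertex-connected: it has more than `k` vertices and stays connected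
after removing any set of fewer than `k` vertices. -/
def KConnected (G : SimpleGraph V) (k : ℕ) [Fintype V] : Prop :=
  k < Fintype.card V ∧
    ∀ S : Set V, S.ncard < k → ∀ u v, u ∉ S → v ∉ S → (delAdj G S).Reachable u v

/-- `u` is an ancestor of `v` (or equal to it) in the tree `T` rooted at `r`:
every walk from the root to `v` passes through `u`. -/
def AncOf (T : SimpleGraph V) (r u v : V) : Prop :=
  ∀ p : T.Walk r v, u ∈ p.support

/-- `IsDFSTree G W r T` : `T` is a spanning tree of the induced graph `G[W]` that can be
produced by a depth-first search from `r ∈ W`:  DFS picks a neighbor `w` of `r`, recursively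
explores the whole component of `w` in `G[W \ {r}]`, and then continues from `r` on the rest. -/
inductive IsDFSTree (G : SimpleGraph V) : Set V → V → SimpleGraph V → Prop
  | single (r : V) : IsDFSTree G {r} r ⊥
  | step (W : Set V) (r w : V) (T₁ T₂ : SimpleGraph V)
      (hr : r ∈ W) (hw : w ∈ W) (hadj : G.Adj r w)
      (hT₁ : IsDFSTree G {u | (restrict G (W \ {r})).Reachable w u} w T₁)
      (hT₂ : IsDFSTree G (W \ {u | (restrict G (W \ {r})).Reachable w u}) r T₂) :
      IsDFSTree G W r (T₁ ⊔ T₂ ⊔ fromEdgeSet {s(r, w)})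

/-- `C` is an internal component of `T \ U`: a component whose root (its vertex closest to the
root `r` of `T`, i.e. the vertex of `C` that is an ancestor of all of `C`) is an ancestor of
some vertex of `U`. -/
def InternalComp (T : SimpleGraph V) (r : V) (U C : Set V) : Prop :=
  IsComp T U C ∧ ∃ ρ ∈ C, (∀ v ∈ C, AncOf T r ρ v) ∧ ∃ u ∈ U, AncOf T r ρ u

/-- `Straddles sup A S`: the set `A` (attachments of a bridge, or a candidate) straddles `S`
with respect to the paths whose supports are `sup i`: on some path an `A`-vertex strictly
precedes an `S`-vertex, and on some path an `A`-vertex strictly succeeds an `S`-vertex. -/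
def Straddles [DecidableEq V] {k : ℕ} (sup : Fin k → List V) (A S : Set V) : Prop :=
  (∃ i, ∃ u ∈ A, u ∈ sup i ∧ ∃ s ∈ S, s ∈ sup i ∧
      (sup i).idxOf u < (sup i).idxOf s) ∧
  (∃ j, ∃ v ∈ A, v ∈ sup j ∧ ∃ s ∈ S, s ∈ sup j ∧
      (sup j).idxOf s < (sup j).idxOf v)

/-- `IsBridgeAttach G PiV pedges Γ A` : `Γ` is a bridge of the path system with vertex set
`PiV` and edge lists `pedges i`, and `A` is its attachment set.  A bridge is either a
connected component of `G \ PiV` (attachments: its neighborhood), or an edge of `G` not on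
any of the paths but with both endpoints on the paths (attachments: its two endpoints). -/
def IsBridgeAttach (G : SimpleGraph V) {k : ℕ} (PiV : Set V)
    (pedges : Fin k → List (Sym2 V)) (Γ A : Set V) : Prop :=
  (IsComp G PiV Γ ∧ A = {v | v ∉ Γ ∧ ∃ u ∈ Γ, G.Adj u v}) ∨
  (∃ u v, G.Adj u v ∧ u ∈ PiV ∧ v ∈ PiV ∧ (∀ i, s(u, v) ∉ pedges i) ∧
    Γ = {u, v} ∧ A = {u, v})


lemma delAdj_mono {G : SimpleGraph V} {S T : Set V} (h : S ⊆ T) :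
    delAdj G T ≤ delAdj G S :=
  fun _ _ ha => ⟨ha.1, fun c => ha.2.1 (h c), fun c => ha.2.2 (h c)⟩

lemma reach_notMem {G : SimpleGraph V} {T : Set V} {a b : V}
    (h : (delAdj G T).Reachable a b) (ha : a ∉ T) : b ∉ T := by
  obtain ⟨w⟩ := h
  induction w with
  | nil => exact ha
  | cons h' w ih => exact ih h'.2.2

lemma walk_reach {G : SimpleGraph V} {S : Set V} {a b : V} (w : G.Walk a b)
    (h : ∀ v ∈ w.support, v ∉ S) : (delAdj G S).Reachable a b := by
  induction w with
  | nil => exact Reachable.refl _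
  | @cons a c b h' w ih =>
      have hadj : (delAdj G S).Adj a c := ⟨h', h a (by simp), h c (by simp)⟩
      exact hadj.reachable.trans (ih fun v hv => h v (by simp [hv]))

lemma indexOf_le_end {G : SimpleGraph V} [DecidableEq V] {a b : V} (q : G.Walk a b)
    (hn : q.support.Nodup) : ∀ w ∈ q.support,
    q.support.idxOf w ≤ q.support.idxOf b := by
  induction q with
  | nil => simp
  | @cons a c b h q ih =>
      intro w hw
      rw [SimpleGraph.Walk.support_cons] at hn hw ⊢
      have hna : a ∉ q.support := (List.nodup_cons.mp hn).1
      have hn' : q.support.Nodup := (List.nodup_cons.mp hn).2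
      have hb : b ∈ q.support := q.end_mem_support
      have hba : a ≠ b := fun e => hna (e ▸ hb)
      rw [List.idxOf_cons_ne _ hba]
      rcases List.mem_cons.mp hw with rfl | hw
      · rw [List.idxOf_cons_self]; omega
      · have hwa : a ≠ w := fun e => hna (e ▸ hw)
        rw [List.idxOf_cons_ne _ hwa]
        have := ih hn' w hw
        omega

/-- if `S = N(Q)` is a candidate with respect to `k` openly-disjoint paths `Π`
from `x` to `y` (one vertex of `S` on each path) and some bridge of `Π` straddles `S`, then
`x` and `y` are connected in `G \ S`. -/
theorem stmt_7 [Fintype V] [DecidableEq V] (G : SimpleGraph V) (k : ℕ)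
    (hG : KConnected G k) (x y : V) (hxy : x ≠ y)
    (p : Fin k → G.Walk x y) (hp : ∀ i, (p i).IsPath)
    (hdisj : ∀ i j, i ≠ j → ∀ v, v ∈ (p i).support → v ∈ (p j).support →
      v = x ∨ v = y)
    (S Q : Set V)
    (hQ : IsComp G {v | ∃ i, v ∈ (p i).support} Q)
    (hSQ : S = {v | v ∉ Q ∧ ∃ u ∈ Q, G.Adj u v})
    (hcard : S.ncard = k)
    (hone : ∀ i, (S ∩ {v | v ∈ (p i).support}).ncard = 1)
    (Γ A : Set V)
    (hbr : IsBridgeAttach G {v | ∃ i, v ∈ (p i).support} (fun i => (p i).edges) Γ A)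
    (hstr : Straddles (fun i => (p i).support) A S) :
    (delAdj G S).Reachable x y := by

  classical
  simp only [Straddles] at hstr
  obtain ⟨⟨i, u, huA, huSup, s₁, hs₁S, hs₁Sup, hlt₁⟩,
          ⟨j, v, hvA, hvSup, s₂, hs₂S, hs₂Sup, hlt₂⟩⟩ := hstr
  have huniq : ∀ i, ∀ w₁, w₁ ∈ S → w₁ ∈ (p i).support →
      ∀ w₂, w₂ ∈ S → w₂ ∈ (p i).support → w₁ = w₂ := by
    intro i w₁ h1 h1' w₂ h2 h2'
    obtain ⟨a, ha⟩ := Set.ncard_eq_one.mp (hone i)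
    have e1 : w₁ ∈ (S ∩ {v | v ∈ (p i).support}) := ⟨h1, h1'⟩
    have e2 : w₂ ∈ (S ∩ {v | v ∈ (p i).support}) := ⟨h2, h2'⟩
    rw [ha] at e1 e2
    simp only [Set.mem_singleton_iff] at e1 e2
    rw [e1, e2]
  have huS : u ∉ S := by
    intro h
    have he := huniq i u h huSup s₁ hs₁S hs₁Sup
    rw [he] at hlt₁; omega
  have hvS : v ∉ S := by
    intro h
    have he := huniq j s₂ hs₂S hs₂Sup v h hvSup
    rw [he] at hlt₂; omega
  have hxu : (delAdj G S).Reachable x u := by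
    apply walk_reach ((p i).takeUntil u huSup)
    intro w hw hwS
    have hsplit : (p i).support =
        ((p i).takeUntil u huSup).support ++ ((p i).dropUntil u huSup).support.tail := by
      conv_lhs => rw [← (p i).take_spec huSup]
      exact Walk.support_append _ _
    have hwP : w ∈ (p i).support := (p i).support_takeUntil_subset huSup hw
    have hws : w = s₁ := huniq i w hwS hwP s₁ hs₁S hs₁Sup
    have hqn : ((p i).takeUntil u huSup).support.Nodup := ((hp i).takeUntil huSup).support_nodup
    have hle := indexOf_le_end _ hqn w hw
    have e1 : (p i).support.idxOf w = ((p i).takeUntil u huSup).support.idxOf w := by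
      rw [hsplit, List.idxOf_append_of_mem hw]
    have e2 : (p i).support.idxOf u = ((p i).takeUntil u huSup).support.idxOf u := by
      rw [hsplit, List.idxOf_append_of_mem (Walk.end_mem_support _)]
    rw [hws] at e1 hle
    omega
  have hvy : (delAdj G S).Reachable v y := by
    apply walk_reach ((p j).dropUntil v hvSup)
    intro w hw hwS
    have hsplit : (p j).support =
        ((p j).takeUntil v hvSup).support ++ ((p j).dropUntil v hvSup).support.tail := by
      conv_lhs => rw [← (p j).take_spec hvSup]
      exact Walk.support_append _ _
    have hwP : w ∈ (p j).support := (p j).support_dropUntil_subset hvSup hw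
    have hws : w = s₂ := huniq j w hwS hwP s₂ hs₂S hs₂Sup
    have hwv : w ≠ v := by
      intro e; rw [hws] at e; rw [e] at hlt₂; omega
    have hwtail : w ∈ ((p j).dropUntil v hvSup).support.tail := by
      have hc := Walk.support_eq_cons ((p j).dropUntil v hvSup)
      rw [hc] at hw
      rcases List.mem_cons.mp hw with rfl | h'
      · exact absurd rfl hwv
      · exact h'
    have hnd : (p j).support.Nodup := (hp j).support_nodup
    rw [hsplit] at hnd
    have hdisj := List.disjoint_of_nodup_append hnd
    have hwq : w ∉ ((p j).takeUntil v hvSup).support := fun h => hdisj h hwtail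
    have e1 : (p j).support.idxOf w =
        ((p j).takeUntil v hvSup).support.length +
          ((p j).dropUntil v hvSup).support.tail.idxOf w := by
      rw [hsplit, List.idxOf_append_of_notMem hwq]
    have e2 : (p j).support.idxOf v = ((p j).takeUntil v hvSup).support.idxOf v := by
      rw [hsplit, List.idxOf_append_of_mem (Walk.end_mem_support _)]
    have e3 : ((p j).takeUntil v hvSup).support.idxOf v <
        ((p j).takeUntil v hvSup).support.length :=
      List.idxOf_lt_length_iff.mpr (Walk.end_mem_support _)
    rw [hws] at e1
    omega
  have huv : (delAdj G S).Reachable u v := by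
    rcases hbr with ⟨⟨g₀, hg₀, hΓ⟩, hA⟩ | ⟨a, b, hab, haP, hbP, _, hΓ, hA⟩
    · -- component bridge
      obtain ⟨q₀, hq₀, hQeq⟩ := hQ
      have hSP : S ⊆ {v | ∃ i, v ∈ (p i).support} := by
        intro s hs
        rw [hSQ] at hs
        obtain ⟨hsQ, qq, hqq, hadjq⟩ := hs
        by_contra hsP
        apply hsQ
        rw [hQeq] at hqq ⊢
        have hqP : qq ∉ {v | ∃ i, v ∈ (p i).support} := reach_notMem hqq hq₀
        exact hqq.trans (Adj.reachable ⟨hadjq, hqP, hsP⟩)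
      rw [hA] at huA hvA
      obtain ⟨huΓ, u', hu'Γ, hu'adj⟩ := huA
      obtain ⟨hvΓ, v', hv'Γ, hv'adj⟩ := hvA
      have hu'R : (delAdj G {v | ∃ i, v ∈ (p i).support}).Reachable g₀ u' := by
        rw [hΓ] at hu'Γ; exact hu'Γ
      have hv'R : (delAdj G {v | ∃ i, v ∈ (p i).support}).Reachable g₀ v' := by
        rw [hΓ] at hv'Γ; exact hv'Γ
      have hu'S : u' ∉ S := fun h => reach_notMem hu'R hg₀ (hSP h)
      have hv'S : v' ∉ S := fun h => reach_notMem hv'R hg₀ (hSP h)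
      have hmid : (delAdj G S).Reachable u' v' :=
        Reachable.mono (delAdj_mono hSP) (hu'R.symm.trans hv'R)
      have a1 : (delAdj G S).Adj u u' := ⟨hu'adj.symm, huS, hu'S⟩
      have a2 : (delAdj G S).Adj v' v := ⟨hv'adj, hv'S, hvS⟩
      exact a1.reachable.trans (hmid.trans a2.reachable)
    · -- edge bridge
      rw [hA] at huA hvA
      rcases eq_or_ne u v with rfl | hne
      · exact Reachable.refl u
      · simp only [Set.mem_insert_iff, Set.mem_singleton_iff] at huA hvA
        have hadj : G.Adj u v := by
          rcases huA with rfl | rfl <;> rcases hvA with rfl | rfl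
          · exact absurd rfl hne
          · exact hab
          · exact hab.symm
          · exact absurd rfl hne
        have a1 : (delAdj G S).Adj u v := ⟨hadj, huS, hvS⟩
        exact a1.reachable
  exact hxu.trans (huv.trans hvy)
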